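/- Let X be a topological space, let K and K' be totally ordered semifields each carrying its canonical topology, let φ : X → K be a function, and let ψ : K → K' be an injective semiring homomorphism. If the composition ψ ∘ φ : X → K' is continuous, then φ is continuous. -/
import Mathlib


/-- A totally ordered idempotent semifield, assumed different from the Boolean semifield `𝔹`. -/
class IdemTOSemifield (K : Type*) extends CommSemiring K, LinearOrder K where
  add_eq_max : ∀ a b : K, a + b = max a b
  exists_inv : ∀ a : K, a ≠ 0 → ∃ b : K, a * b = 1
  exists_nontrivial_unit : ∃ a : K, a ≠ 0 ∧ a ≠ 1

/-- The canonical topology on a totally ordered semifield. -/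
def canonicalTopology (K : Type*) [IdemTOSemifield K] : TopologicalSpace K :=
  TopologicalSpace.generateFrom
    {s : Set K | (∃ a : K, a ≠ 0 ∧ s = {a}) ∨ (∃ a : K, a ≠ 0 ∧ s = Set.Iic a)}

/-!
Statement 4: continuity of a map into a totally ordered semifield can be tested after composing
with an injective homomorphism of totally ordered semifields.
-/

theorem continuous_of_injective_comp_continuous {X K K' : Type*} [TopologicalSpace X]
    [IdemTOSemifield K] [IdemTOSemifield K'] (φ : X → K) (ψ : K →+* K')
    (hψ : Function.Injective ψ)
    (h : @Continuous X K' _ (canonicalTopology K') fun x => ψ (φ x)) :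
    @Continuous X K _ (canonicalTopology K) φ := by
  letI : TopologicalSpace K' := canonicalTopology K'
  have hle : ∀ x y : K, x ≤ y ↔ ψ x ≤ ψ y := by
    intro x y
    constructor
    · intro hxy
      have h1 : x + y = y := by rw [IdemTOSemifield.add_eq_max]; exact max_eq_right hxy
      have h2 := congrArg ψ h1
      rw [map_add, IdemTOSemifield.add_eq_max] at h2
      exact max_eq_right_iff.mp h2
    · intro hxy
      have h1 : ψ (x + y) = ψ y := by
        rw [map_add, IdemTOSemifield.add_eq_max]; exact max_eq_right hxy
      have h2 : x + y = y := hψ h1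
      rw [IdemTOSemifield.add_eq_max] at h2
      exact max_eq_right_iff.mp h2
  have hne : ∀ a : K, a ≠ 0 → ψ a ≠ 0 := fun a ha h0 => ha (hψ (by simp [h0]))
  rw [canonicalTopology, continuous_generateFrom_iff]
  rintro s (⟨a, ha, rfl⟩ | ⟨a, ha, rfl⟩)
  · have heq : φ ⁻¹' {a} = (fun x => ψ (φ x)) ⁻¹' {ψ a} := by
      ext x; simp [hψ.eq_iff]
    rw [heq]
    exact h.isOpen_preimage _
      (TopologicalSpace.isOpen_generateFrom_of_mem (Or.inl ⟨ψ a, hne a ha, rfl⟩))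
  · have heq : φ ⁻¹' Set.Iic a = (fun x => ψ (φ x)) ⁻¹' Set.Iic (ψ a) := by
      ext x; simp [Set.mem_Iic, hle]
    rw [heq]
    exact h.isOpen_preimage _
      (TopologicalSpace.isOpen_generateFrom_of_mem (Or.inr ⟨ψ a, hne a ha, rfl⟩))
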